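/- Let ε > 0, c > 0 and 0 < a < b. For each natural number n ≥ 1 let λₙ ∈ (0, ε(nπ/c)²) satisfy the flat characteristic equation tanh(a·√((nπ/c)² − λₙ/ε))/√((nπ/c)² − λₙ/ε) = tanh(b·√((nπ/c)² + λₙ/ε))/√((nπ/c)² + λₙ/ε). Then λₙ → 0 as n → ∞; in fact n²·αₙ → 0, where αₙ = (λₙ/ε)·(c/(nπ))². -/

import Mathlib

open Real Filter

/-- auxiliary: tanh is at most 1. -/
lemma aux_tanh_le_one (x : ℝ) : Real.tanh x ≤ 1 := by
  rw [Real.tanh_eq_sinh_div_cosh, div_le_one (Real.cosh_pos x)]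
  nlinarith [Real.exp_pos (-x), Real.cosh_sub_sinh x]

lemma aux_tanh_nonneg {x : ℝ} (hx : 0 ≤ x) : 0 ≤ Real.tanh x := by
  rw [Real.tanh_eq_sinh_div_cosh]
  exact div_nonneg (by rwa [Real.sinh_nonneg_iff]) (Real.cosh_pos x).le

lemma aux_self_le_sinh {x : ℝ} (hx : 0 ≤ x) : x ≤ Real.sinh x := by
  rcases eq_or_lt_of_le hx with h | h
  · simp [← h]
  · exact (Real.self_lt_sinh_iff.2 h).le

lemma aux_cosh_le_two {x : ℝ} (h0 : 0 ≤ x) (h1 : x ≤ 1) : Real.cosh x ≤ 2 := by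
  have h2 : Real.cosh x ≤ Real.cosh 1 := by
    rw [Real.cosh_le_cosh]
    rw [abs_of_nonneg h0, abs_of_nonneg (by norm_num : (0:ℝ) ≤ 1)]
    exact h1
  have h3 : Real.cosh 1 ≤ 2 := by
    rw [Real.cosh_eq]
    have he : Real.exp 1 < 2.7182818286 := Real.exp_one_lt_d9
    have he' : Real.exp (-1) ≤ 1 := by
      rw [Real.exp_le_one_iff]; norm_num
    linarith
  linarith

lemma aux_half_le_tanh {x : ℝ} (h0 : 0 ≤ x) (h1 : x ≤ 1) : x / 2 ≤ Real.tanh x := by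
  rw [Real.tanh_eq_sinh_div_cosh]
  exact div_le_div₀ (Real.sinh_nonneg_iff.2 h0) (aux_self_le_sinh h0)
    (Real.cosh_pos x) (aux_cosh_le_two h0 h1)

lemma aux_tanh_ge_half {x : ℝ} (hx : 1 ≤ x) : 1 / 2 ≤ Real.tanh x := by
  have h0 : (0:ℝ) ≤ x := by linarith
  rw [Real.tanh_eq_sinh_div_cosh, le_div_iff₀ (Real.cosh_pos x)]
  have h1 : Real.cosh x - Real.sinh x = Real.exp (-x) := Real.cosh_sub_sinh x
  have h2 : Real.exp (-x) ≤ 1 := by rw [Real.exp_le_one_iff]; linarith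
  have h3 : x ≤ Real.sinh x := aux_self_le_sinh h0
  nlinarith

lemma aux_one_sub_tanh_sq {x : ℝ} (hx : 0 ≤ x) :
    1 - Real.tanh x ^ 2 ≤ 4 * Real.exp (-(2 * x)) := by
  have hc := Real.cosh_pos x
  have hid : 1 - Real.tanh x ^ 2 = 1 / Real.cosh x ^ 2 := by
    rw [Real.tanh_eq_sinh_div_cosh, div_pow]
    have := Real.cosh_sq_sub_sinh_sq x
    field_simp
    linarith
  rw [hid]
  have hcosh : Real.exp x / 2 ≤ Real.cosh x := by
    rw [Real.cosh_eq]
    have := (Real.exp_pos (-x)).le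
    linarith
  have hexp := Real.exp_pos x
  have h1 : Real.exp x ^ 2 / 4 ≤ Real.cosh x ^ 2 := by nlinarith
  have h2 : 1 / Real.cosh x ^ 2 ≤ 4 / Real.exp x ^ 2 := by
    rw [show (4:ℝ) / Real.exp x ^ 2 = 1 / (Real.exp x ^ 2 / 4) by field_simp]
    exact one_div_le_one_div_of_le (by positivity) h1
  calc 1 / Real.cosh x ^ 2 ≤ 4 / Real.exp x ^ 2 := h2
    _ = 4 * Real.exp (-(2 * x)) := by
        have h4 : Real.exp (-(2 * x)) = 1 / Real.exp x ^ 2 := by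
          rw [Real.exp_neg, show (2:ℝ) * x = x + x by ring, Real.exp_add, one_div, sq]
        rw [h4]; ring

/-- Key quantitative bound from the characteristic equation. -/
lemma aux_key (a b k μ : ℝ) (ha : 0 < a) (hab : a < b) (hk0 : 0 < k) (hk : 2 < a * k)
    (hμ : 0 < μ) (hμk : μ < k ^ 2)
    (heq : Real.tanh (a * Real.sqrt (k ^ 2 - μ)) / Real.sqrt (k ^ 2 - μ)
      = Real.tanh (b * Real.sqrt (k ^ 2 + μ)) / Real.sqrt (k ^ 2 + μ)) :
    μ ≤ 16 * k ^ 2 * Real.exp (-(a * k)) := by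
  set s := Real.sqrt (k ^ 2 - μ) with hs_def
  set t := Real.sqrt (k ^ 2 + μ) with ht_def
  have hb0 : 0 < b := lt_trans ha hab
  have hs_pos : 0 < s := Real.sqrt_pos.2 (by linarith)
  have ht_pos : 0 < t := Real.sqrt_pos.2 (by positivity)
  have hs_sq : s ^ 2 = k ^ 2 - μ := Real.sq_sqrt (by linarith)
  have ht_sq : t ^ 2 = k ^ 2 + μ := Real.sq_sqrt (by positivity)
  have ht_ge_k : k ≤ t := by
    nlinarith [ht_sq, hμ, ht_pos, hk0]
  -- the cross-multiplied equation
  have hcross : Real.tanh (a * s) * t = Real.tanh (b * t) * s := by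
    field_simp at heq
    linarith [heq]
  -- step 1: tanh(a s)/s ≤ 1/k
  have hstep2 : k * Real.tanh (a * s) ≤ s := by
    have h1 : Real.tanh (b * t) ≤ 1 := aux_tanh_le_one _
    have h2 : Real.tanh (a * s) * t = Real.tanh (b * t) * s := hcross
    nlinarith [aux_tanh_nonneg (mul_nonneg ha.le hs_pos.le)]
  -- step 3: a * s > 1
  have has : 1 < a * s := by
    by_contra h
    push_neg at h
    have h0 : 0 ≤ a * s := mul_nonneg ha.le hs_pos.le
    have := aux_half_le_tanh h0 h
    nlinarith
  -- step 4
  have htanh_as : 1 / 2 ≤ Real.tanh (a * s) := aux_tanh_ge_half has.le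
  have hs_ge : k / 2 ≤ s := by nlinarith
  have hbt : 1 ≤ b * t := by nlinarith
  have htanh_bt : 1 / 2 ≤ Real.tanh (b * t) := aux_tanh_ge_half hbt
  -- step 5
  have htanh_bt_le : Real.tanh (b * t) ≤ 1 := aux_tanh_le_one _
  have h2mu : t ^ 2 - s ^ 2 = 2 * μ := by rw [hs_sq, ht_sq]; ring
  have hX : Real.tanh (b * t) ^ 2 ≤ 1 := by nlinarith
  have hmain : 2 * μ * Real.tanh (b * t) ^ 2 ≤ t ^ 2 * (1 - Real.tanh (a * s) ^ 2) := by
    have h1 : s ^ 2 * Real.tanh (b * t) ^ 2 = t ^ 2 * Real.tanh (a * s) ^ 2 := by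
      calc s ^ 2 * Real.tanh (b * t) ^ 2 = (Real.tanh (b * t) * s) ^ 2 := by ring
        _ = (Real.tanh (a * s) * t) ^ 2 := by rw [hcross]
        _ = t ^ 2 * Real.tanh (a * s) ^ 2 := by ring
    have e : 2 * μ * Real.tanh (b * t) ^ 2
        = t ^ 2 * Real.tanh (b * t) ^ 2 - t ^ 2 * Real.tanh (a * s) ^ 2 := by
      linear_combination (-(Real.tanh (b * t) ^ 2)) * h2mu - h1
    have hprod : 0 ≤ t ^ 2 * (1 - Real.tanh (b * t) ^ 2) :=
      mul_nonneg (sq_nonneg t) (by linarith)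
    linarith
  have hdecay : 1 - Real.tanh (a * s) ^ 2 ≤ 4 * Real.exp (-(2 * (a * s))) :=
    aux_one_sub_tanh_sq (by positivity)
  have hexp_le : Real.exp (-(2 * (a * s))) ≤ Real.exp (-(a * k)) := by
    apply Real.exp_le_exp.2
    nlinarith
  have ht2 : t ^ 2 ≤ 2 * k ^ 2 := by rw [ht_sq]; linarith
  have hfinal : 2 * μ * (1 / 4) ≤ 2 * k ^ 2 * (4 * Real.exp (-(a * k))) := by
    have hX4 : ((1:ℝ) / 2) ^ 2 ≤ Real.tanh (b * t) ^ 2 :=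
      pow_le_pow_left₀ (by norm_num) htanh_bt 2
    have e1 : 2 * μ * (1 / 4) ≤ 2 * μ * Real.tanh (b * t) ^ 2 := by
      have := mul_le_mul_of_nonneg_left hX4 (by linarith : (0:ℝ) ≤ 2 * μ)
      norm_num at this
      linarith
    have e2 : t ^ 2 * (1 - Real.tanh (a * s) ^ 2)
        ≤ t ^ 2 * (4 * Real.exp (-(a * k))) := by
      have := (Real.exp_pos (-(a * k))).le
      have h3 : 1 - Real.tanh (a * s) ^ 2 ≤ 4 * Real.exp (-(a * k)) := by
        calc 1 - Real.tanh (a * s) ^ 2 ≤ 4 * Real.exp (-(2 * (a * s))) := hdecay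
          _ ≤ 4 * Real.exp (-(a * k)) := by linarith
      exact mul_le_mul_of_nonneg_left h3 (by positivity)
    have e3 : t ^ 2 * (4 * Real.exp (-(a * k)))
        ≤ 2 * k ^ 2 * (4 * Real.exp (-(a * k))) :=
      mul_le_mul_of_nonneg_right ht2 (by positivity)
    linarith
  linarith

/-- For critical contrast ε₊ = ε₋ = ε and 0 < a < b, the positive roots
λₙ ∈ (0, ε(nπ/c)²) of the flat characteristic equation tend to 0; in fact n²·αₙ → 0
where αₙ = (λₙ/ε)(c/(nπ))². -/
theorem stmt_3 (ε a b c : ℝ) (hε : 0 < ε) (hc : 0 < c) (ha : 0 < a) (hab : a < b)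
    (lam : ℕ → ℝ)
    (hmem : ∀ n : ℕ, 1 ≤ n → lam n ∈ Set.Ioo (0 : ℝ) (ε * ((n : ℝ) * π / c) ^ 2))
    (heq : ∀ n : ℕ, 1 ≤ n →
      Real.tanh (a * Real.sqrt (((n : ℝ) * π / c) ^ 2 - lam n / ε)) /
          Real.sqrt (((n : ℝ) * π / c) ^ 2 - lam n / ε)
        = Real.tanh (b * Real.sqrt (((n : ℝ) * π / c) ^ 2 + lam n / ε)) /
          Real.sqrt (((n : ℝ) * π / c) ^ 2 + lam n / ε)) :
    Tendsto lam atTop (nhds 0) ∧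
    Tendsto (fun n : ℕ => (n : ℝ) ^ 2 * ((lam n / ε) * (c / ((n : ℝ) * π)) ^ 2))
      atTop (nhds 0) := by
  have hπ : (0:ℝ) < π := Real.pi_pos
  let k : ℕ → ℝ := fun n => (n : ℝ) * π / c
  have hk_def : ∀ n : ℕ, k n = (n : ℝ) * π / c := fun n => rfl
  -- k tends to infinity
  have hk_tendsto : Tendsto k atTop atTop := by
    have h0 : Tendsto (fun n : ℕ => (n : ℝ)) atTop atTop := tendsto_natCast_atTop_atTop
    have h2 : Tendsto (fun n : ℕ => (n : ℝ) * (π / c)) atTop atTop :=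
      h0.atTop_mul_const (by positivity)
    refine h2.congr (fun n => by rw [hk_def]; ring)
  -- eventual bound on μ n = lam n / ε
  have hbound : ∀ᶠ n : ℕ in atTop, 0 < lam n / ε ∧
      lam n / ε ≤ 16 * (k n) ^ 2 * Real.exp (-(a * k n)) := by
    have h1 : ∀ᶠ n : ℕ in atTop, 2 < a * k n := by
      have := hk_tendsto.eventually_gt_atTop (2 / a)
      filter_upwards [this] with n hn
      rw [div_lt_iff₀ ha] at hn
      linarith [hn]
    have h2 : ∀ᶠ n : ℕ in atTop, 1 ≤ n := eventually_ge_atTop 1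
    have h3 : ∀ᶠ n : ℕ in atTop, 0 < k n := hk_tendsto.eventually_gt_atTop 0
    filter_upwards [h1, h2, h3] with n hn1 hn2 hn3
    obtain ⟨hl0, hlu⟩ := hmem n hn2
    have hμ0 : 0 < lam n / ε := div_pos hl0 hε
    have hμk : lam n / ε < (k n) ^ 2 := by
      rw [div_lt_iff₀ hε]
      calc lam n < ε * (k n) ^ 2 := hlu
        _ = (k n) ^ 2 * ε := by ring
    refine ⟨hμ0, aux_key a b (k n) (lam n / ε) ha hab hn3 hn1 hμ0 hμk ?_⟩
    exact heq n hn2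
  -- the bound tends to zero
  have hB : Tendsto (fun n : ℕ => 16 * (k n) ^ 2 * Real.exp (-(a * k n))) atTop (nhds 0) := by
    have hx : Tendsto (fun x : ℝ => x ^ (2:ℝ) * Real.exp (-a * x)) atTop (nhds 0) :=
      tendsto_rpow_mul_exp_neg_mul_atTop_nhds_zero 2 a ha
    have hx' : Tendsto (fun x : ℝ => 16 * (x ^ 2 * Real.exp (-(a * x)))) atTop (nhds 0) := by
      have h16 : Tendsto (fun x : ℝ => 16 * (x ^ (2:ℝ) * Real.exp (-a * x))) atTop
          (nhds (16 * 0)) := hx.const_mul 16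
      rw [mul_zero] at h16
      refine Tendsto.congr' ?_ h16
      filter_upwards [eventually_ge_atTop (0:ℝ)] with x hx0
      rw [show x ^ (2:ℝ) = x ^ (2:ℕ) from Real.rpow_natCast x 2, neg_mul]
    have := hx'.comp hk_tendsto
    refine this.congr (fun n => by simp only [Function.comp]; ring)
  -- μ tends to zero
  have hμ_tendsto : Tendsto (fun n : ℕ => lam n / ε) atTop (nhds 0) := by
    apply squeeze_zero' (by filter_upwards [hbound] with n hn; exact hn.1.le)
      (by filter_upwards [hbound] with n hn; exact hn.2) hB
  constructor
  · have := hμ_tendsto.const_mul ε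
    rw [mul_zero] at this
    refine this.congr (fun n => ?_)
    field_simp
  · have h := hμ_tendsto.mul_const ((c / π) ^ 2)
    rw [zero_mul] at h
    refine h.congr' ?_
    filter_upwards [eventually_ge_atTop 1] with n hn
    have hn0 : ((n : ℝ)) ≠ 0 := Nat.cast_ne_zero.mpr (by omega)
    field_simp
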